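/- Let N ≥ 1 and let x, y : {1,…,N}×{1,…,N} → {0,2}. Consider the two-player game in which both players' action set is {1,…,2N}; for an action a write i(a) = ⌈a/2⌉ ∈ {1,…,N} and r(a) = a − 2(i(a)−1) ∈ {1,2}; define the 2×2 gadget payoffs g₁(r,s;x) = 2 if (r,s)=(1,1), 1 if (r,s)=(1,2), 1 if (r,s)=(2,1), x if (r,s)=(2,2), and g₂(r,s;y) = 1 if (r,s)=(1,1), 2 if (r,s)=(1,2), y if (r,s)=(2,1), 1 if (r,s)=(2,2); the utilities are u₁(a,b) = g₁(r(a),r(b); x_{i(a),i(b)}) + 3·i(a) and u₂(a,b) = g₂(r(a),r(b); y_{i(a),i(b)}) + 3·i(b). Then this game has a better-reply cycle if and only if there exist i, j ∈ {1,…,N} with x_{i,j} = 2 and y_{i,j} = 2. -/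

import Mathlib

/-- The game with players `P`, action sets `C p`, and utilities `u` has a better-reply
cycle: a sequence of profiles `a 0, a 1, …, a K` with `K ≥ 1` and `a K = a 0`, each
obtained from the previous one by changing the action of exactly one player, whose
utility strictly increases. -/
def HasBetterReplyCycle {P : Type*} {C : P → Type*}
    (u : ∀ _ : P, (∀ q, C q) → ℝ) : Prop :=
  ∃ (K : ℕ) (a : ℕ → ∀ q, C q), 1 ≤ K ∧ a K = a 0 ∧
    ∀ t < K, ∃ p : P, a (t + 1) p ≠ a t p ∧ (∀ q, q ≠ p → a (t + 1) q = a t q) ∧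
      u p (a t) < u p (a (t + 1))

/-- Both players' action set `{1,…,2N}`. -/
def Act14 (N : ℕ) : Type := {a : ℕ // a ∈ Finset.Icc 1 (2 * N)}

/-- `i(a) = ⌈a/2⌉`. -/
def blockIdx (a : ℕ) : ℕ := (a + 1) / 2

/-- `r(a) = a - 2(i(a) - 1) ∈ {1,2}`. -/
def inBlockIdx (a : ℕ) : ℕ := a - 2 * (blockIdx a - 1)

/-- The `2×2` gadget payoff of player 1: `g₁(1,1) = 2`, `g₁(1,2) = 1`, `g₁(2,1) = 1`,
`g₁(2,2) = x`. -/
noncomputable def gadget1 (r s : ℕ) (x : ℝ) : ℝ :=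
  if r = 1 ∧ s = 1 then 2 else if r = 1 ∧ s = 2 then 1
  else if r = 2 ∧ s = 1 then 1 else x

/-- The `2×2` gadget payoff of player 2: `g₂(1,1) = 1`, `g₂(1,2) = 2`, `g₂(2,1) = y`,
`g₂(2,2) = 1`. -/
noncomputable def gadget2 (r s : ℕ) (y : ℝ) : ℝ :=
  if r = 1 ∧ s = 1 then 1 else if r = 1 ∧ s = 2 then 2
  else if r = 2 ∧ s = 1 then y else 1

/-- The two-player game: `u₁(a,b) = g₁(r(a), r(b); x_{i(a),i(b)}) + 3 i(a)` and
`u₂(a,b) = g₂(r(a), r(b); y_{i(a),i(b)}) + 3 i(b)`. -/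
noncomputable def game14 (N : ℕ) (x y : ℕ → ℕ → ℝ) :
    ∀ _ : Fin 2, (∀ _ : Fin 2, Act14 N) → ℝ :=
  fun p σ =>
    if p = 0 then
      gadget1 (inBlockIdx (σ 0).1) (inBlockIdx (σ 1).1)
        (x (blockIdx (σ 0).1) (blockIdx (σ 1).1)) + 3 * (blockIdx (σ 0).1 : ℝ)
    else
      gadget2 (inBlockIdx (σ 0).1) (inBlockIdx (σ 1).1)
        (y (blockIdx (σ 0).1) (blockIdx (σ 1).1)) + 3 * (blockIdx (σ 1).1 : ℝ)

section BRCAux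

lemma act_facts {N a : ℕ} (h : a ∈ Finset.Icc 1 (2*N)) :
    (1 ≤ blockIdx a ∧ blockIdx a ≤ N) ∧ (inBlockIdx a = 1 ∨ inBlockIdx a = 2) ∧
      a = 2 * blockIdx a - 2 + inBlockIdx a := by
  simp only [Finset.mem_Icc] at h
  unfold inBlockIdx blockIdx
  omega

lemma gadget1_bounds (r s : ℕ) {x : ℝ} (hx : x = 0 ∨ x = 2) :
    0 ≤ gadget1 r s x ∧ gadget1 r s x ≤ 2 := by
  unfold gadget1; rcases hx with h | h <;> subst h <;> split_ifs <;> norm_num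

lemma gadget2_bounds (r s : ℕ) {y : ℝ} (hy : y = 0 ∨ y = 2) :
    0 ≤ gadget2 r s y ∧ gadget2 r s y ≤ 2 := by
  unfold gadget2; rcases hy with h | h <;> subst h <;> split_ifs <;> norm_num

noncomputable def phi (x y : ℝ) (r s : ℕ) : ℕ :=
  if x = 0 then
    if y = 0 then
      if r = 2 ∧ s = 1 then 0 else if r = 2 ∧ s = 2 then 1
      else if r = 1 ∧ s = 1 then 2 else 3
    else
      if r = 2 ∧ s = 2 then 0 else if r = 2 ∧ s = 1 then 1
      else if r = 1 ∧ s = 1 then 2 else 3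
  else
    if r = 2 ∧ s = 1 then 0 else if r = 1 ∧ s = 1 then 1
    else if r = 1 ∧ s = 2 then 2 else 3

lemma phi_step1 {x y : ℝ} (hx : x = 0 ∨ x = 2) (hy : y = 0 ∨ y = 2)
    (hxy : ¬(x = 2 ∧ y = 2)) {r r' s : ℕ}
    (hr : r = 1 ∨ r = 2) (hr' : r' = 1 ∨ r' = 2) (hs : s = 1 ∨ s = 2)
    (h : gadget1 r s x < gadget1 r' s x) : phi x y r s < phi x y r' s := by
  rcases hx with hx | hx <;> rcases hy with hy | hy <;>
    rcases hr with hr | hr <;> rcases hr' with hr' | hr' <;> rcases hs with hs | hs <;>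
    subst_vars <;> simp_all [gadget1, phi] <;> norm_num at h

lemma phi_step2 {x y : ℝ} (hx : x = 0 ∨ x = 2) (hy : y = 0 ∨ y = 2)
    (hxy : ¬(x = 2 ∧ y = 2)) {r s s' : ℕ}
    (hr : r = 1 ∨ r = 2) (hs : s = 1 ∨ s = 2) (hs' : s' = 1 ∨ s' = 2)
    (h : gadget2 r s y < gadget2 r s' y) : phi x y r s < phi x y r s' := by
  rcases hx with hx | hx <;> rcases hy with hy | hy <;>
    rcases hr with hr | hr <;> rcases hs with hs | hs <;> rcases hs' with hs' | hs' <;>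
    subst_vars <;> simp_all [gadget2, phi] <;> norm_num at h

lemma mono_of_step {f : ℕ → ℕ} {K : ℕ} (h : ∀ t < K, f t ≤ f (t+1)) :
    ∀ s t, s ≤ t → t ≤ K → f s ≤ f t := by
  intro s t hst htK
  induction t with
  | zero => exact le_of_eq (congrArg f (by omega))
  | succ n ih =>
    rcases Nat.lt_or_ge s (n+1) with h1 | h1
    · exact le_trans (ih (by omega) (by omega)) (h n (by omega))
    · have : s = n + 1 := by omega
      simp [this]

lemma strict_chain {f : ℕ → ℕ} {K : ℕ} (h : ∀ t < K, f t < f (t+1)) (hK : 1 ≤ K) :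
    f 0 < f K := by
  induction K with
  | zero => omega
  | succ n ih =>
    rcases Nat.eq_zero_or_pos n with h0 | h0
    · subst h0; exact h 0 (by omega)
    · exact lt_trans (ih (fun t ht => h t (by omega)) h0) (h n (by omega))

theorem fwd (N : ℕ) (hN : 1 ≤ N) (x y : ℕ → ℕ → ℝ)
    (hx : ∀ i ∈ Finset.Icc 1 N, ∀ j ∈ Finset.Icc 1 N, x i j = 0 ∨ x i j = 2)
    (hy : ∀ i ∈ Finset.Icc 1 N, ∀ j ∈ Finset.Icc 1 N, y i j = 0 ∨ y i j = 2)
    (hc : HasBetterReplyCycle (game14 N x y)) :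
      ∃ i ∈ Finset.Icc 1 N, ∃ j ∈ Finset.Icc 1 N, x i j = 2 ∧ y i j = 2 := by
  obtain ⟨K, a, hK, hcyc, hstep⟩ := hc
  by_contra hno
  push_neg at hno
  have memI : ∀ t, blockIdx (a t 0).1 ∈ Finset.Icc 1 N := fun t =>
    Finset.mem_Icc.mpr (act_facts (a t 0).2).1
  have memJ : ∀ t, blockIdx (a t 1).1 ∈ Finset.Icc 1 N := fun t =>
    Finset.mem_Icc.mpr (act_facts (a t 1).2).1
  -- Stage 1 : blocks are monotone along the cycle
  have key : ∀ t < K, blockIdx (a t 0).1 ≤ blockIdx (a (t+1) 0).1 ∧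
      blockIdx (a t 1).1 ≤ blockIdx (a (t+1) 1).1 := by
    intro t ht
    obtain ⟨p, hne, hoth, hlt⟩ := hstep t ht
    obtain rfl | rfl : p = 0 ∨ p = 1 := by omega
    · have h1 : a (t+1) 1 = a t 1 := hoth 1 (by decide)
      refine ⟨?_, by rw [h1]⟩
      simp only [game14, reduceIte, h1] at hlt
      obtain ⟨g1a, g1b⟩ := gadget1_bounds (inBlockIdx (a t 0).1) (inBlockIdx (a t 1).1)
        (hx _ (memI t) _ (memJ t))
      obtain ⟨g2a, g2b⟩ := gadget1_bounds (inBlockIdx (a (t+1) 0).1) (inBlockIdx (a t 1).1)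
        (hx _ (memI (t+1)) _ (memJ t))
      by_contra hcon
      push_neg at hcon
      have hcast : (blockIdx (a (t+1) 0).1 : ℝ) + 1 ≤ (blockIdx (a t 0).1 : ℝ) := by
        exact_mod_cast hcon
      linarith
    · have h0 : a (t+1) 0 = a t 0 := hoth 0 (by decide)
      refine ⟨by rw [h0], ?_⟩
      simp only [game14, if_neg (show (1 : Fin 2) ≠ 0 by decide), h0] at hlt
      obtain ⟨g1a, g1b⟩ := gadget2_bounds (inBlockIdx (a t 0).1) (inBlockIdx (a t 1).1)
        (hy _ (memI t) _ (memJ t))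
      obtain ⟨g2a, g2b⟩ := gadget2_bounds (inBlockIdx (a t 0).1) (inBlockIdx (a (t+1) 1).1)
        (hy _ (memI t) _ (memJ (t+1)))
      by_contra hcon
      push_neg at hcon
      have hcast : (blockIdx (a (t+1) 1).1 : ℝ) + 1 ≤ (blockIdx (a t 1).1 : ℝ) := by
        exact_mod_cast hcon
      linarith
  have hI := mono_of_step (f := fun t => blockIdx (a t 0).1) (K := K)
    (fun t ht => (key t ht).1)
  have hJ := mono_of_step (f := fun t => blockIdx (a t 1).1) (K := K)
    (fun t ht => (key t ht).2)
  have hIc : ∀ t ≤ K, blockIdx (a t 0).1 = blockIdx (a 0 0).1 := by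
    intro t ht
    have h1 : blockIdx (a t 0).1 ≤ blockIdx (a K 0).1 := hI t K ht le_rfl
    have h2 : blockIdx (a 0 0).1 ≤ blockIdx (a t 0).1 := hI 0 t (Nat.zero_le _) ht
    rw [hcyc] at h1
    omega
  have hJc : ∀ t ≤ K, blockIdx (a t 1).1 = blockIdx (a 0 1).1 := by
    intro t ht
    have h1 : blockIdx (a t 1).1 ≤ blockIdx (a K 1).1 := hJ t K ht le_rfl
    have h2 : blockIdx (a 0 1).1 ≤ blockIdx (a t 1).1 := hJ 0 t (Nat.zero_le _) ht
    rw [hcyc] at h1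
    omega
  set i0 := blockIdx (a 0 0).1 with hi0def
  set j0 := blockIdx (a 0 1).1 with hj0def
  have hx0 : x i0 j0 = 0 ∨ x i0 j0 = 2 := hx _ (memI 0) _ (memJ 0)
  have hy0 : y i0 j0 = 0 ∨ y i0 j0 = 2 := hy _ (memI 0) _ (memJ 0)
  have hxy : ¬(x i0 j0 = 2 ∧ y i0 j0 = 2) := fun ⟨h1, h2⟩ =>
    hno i0 (memI 0) j0 (memJ 0) h1 h2
  -- Stage 2 : the potential strictly increases
  have hPhi : ∀ t < K, phi (x i0 j0) (y i0 j0) (inBlockIdx (a t 0).1) (inBlockIdx (a t 1).1)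
      < phi (x i0 j0) (y i0 j0) (inBlockIdx (a (t+1) 0).1) (inBlockIdx (a (t+1) 1).1) := by
    intro t ht
    obtain ⟨p, hne, hoth, hlt⟩ := hstep t ht
    have hIt := hIc t (le_of_lt ht)
    have hIt' := hIc (t+1) ht
    have hJt := hJc t (le_of_lt ht)
    have hJt' := hJc (t+1) ht
    obtain rfl | rfl : p = 0 ∨ p = 1 := by omega
    · have h1 : a (t+1) 1 = a t 1 := hoth 1 (by decide)
      rw [h1]
      simp only [game14, reduceIte, h1, hIt, hIt', hJt] at hlt
      have hg : gadget1 (inBlockIdx (a t 0).1) (inBlockIdx (a t 1).1) (x i0 j0)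
          < gadget1 (inBlockIdx (a (t+1) 0).1) (inBlockIdx (a t 1).1) (x i0 j0) := by
        linarith
      exact phi_step1 hx0 hy0 hxy ((act_facts (a t 0).2).2.1)
        ((act_facts (a (t+1) 0).2).2.1) ((act_facts (a t 1).2).2.1) hg
    · have h0 : a (t+1) 0 = a t 0 := hoth 0 (by decide)
      rw [h0]
      simp only [game14, if_neg (show (1 : Fin 2) ≠ 0 by decide), h0, hIt, hJt, hJt'] at hlt
      have hg : gadget2 (inBlockIdx (a t 0).1) (inBlockIdx (a t 1).1) (y i0 j0)
          < gadget2 (inBlockIdx (a t 0).1) (inBlockIdx (a (t+1) 1).1) (y i0 j0) := by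
        linarith
      exact phi_step2 hx0 hy0 hxy ((act_facts (a t 0).2).2.1)
        ((act_facts (a t 1).2).2.1) ((act_facts (a (t+1) 1).2).2.1) hg
  have hchain := strict_chain (f := fun t =>
    phi (x i0 j0) (y i0 j0) (inBlockIdx (a t 0).1) (inBlockIdx (a t 1).1)) hPhi hK
  simp only [hcyc] at hchain
  exact lt_irrefl _ hchain


lemma blockIdx_odd {i : ℕ} (h : 1 ≤ i) : blockIdx (2*i-1) = i := by unfold blockIdx; omega
lemma blockIdx_even {i : ℕ} (h : 1 ≤ i) : blockIdx (2*i) = i := by unfold blockIdx; omega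
lemma inBlockIdx_odd {i : ℕ} (h : 1 ≤ i) : inBlockIdx (2*i-1) = 1 := by
  unfold inBlockIdx blockIdx; omega
lemma inBlockIdx_even {i : ℕ} (h : 1 ≤ i) : inBlockIdx (2*i) = 2 := by
  unfold inBlockIdx blockIdx; omega

lemma hasCycle_of_four {P : Type*} {C : P → Type*} (u : ∀ _ : P, (∀ q, C q) → ℝ)
    (c : ℕ → ∀ q, C q)
    (h : ∀ t < 4, ∃ p, c ((t+1) % 4) p ≠ c (t % 4) p ∧
      (∀ q, q ≠ p → c ((t+1) % 4) q = c (t % 4) q) ∧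
      u p (c (t % 4)) < u p (c ((t+1) % 4))) :
    HasBetterReplyCycle u := by
  refine ⟨4, fun t => c (t % 4), by norm_num, by norm_num, ?_⟩
  intro t ht
  exact h t ht

theorem bwd (N : ℕ) (hN : 1 ≤ N) (x y : ℕ → ℕ → ℝ)
    (h : ∃ i ∈ Finset.Icc 1 N, ∃ j ∈ Finset.Icc 1 N, x i j = 2 ∧ y i j = 2) :
    HasBetterReplyCycle (game14 N x y) := by
  obtain ⟨i, hi, j, hj, hxij, hyij⟩ := h
  rw [Finset.mem_Icc] at hi hj
  have hA1 : 2*i-1 ∈ Finset.Icc 1 (2*N) := by rw [Finset.mem_Icc]; omega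
  have hA2 : 2*i ∈ Finset.Icc 1 (2*N) := by rw [Finset.mem_Icc]; omega
  have hB1 : 2*j-1 ∈ Finset.Icc 1 (2*N) := by rw [Finset.mem_Icc]; omega
  have hB2 : 2*j ∈ Finset.Icc 1 (2*N) := by rw [Finset.mem_Icc]; omega
  set A1 : Act14 N := ⟨2*i-1, hA1⟩ with hA1d
  set A2 : Act14 N := ⟨2*i, hA2⟩ with hA2d
  set B1 : Act14 N := ⟨2*j-1, hB1⟩ with hB1d
  set B2 : Act14 N := ⟨2*j, hB2⟩ with hB2d
  have hAne : A2 ≠ A1 := by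
    intro hh
    have := congrArg (fun z : Act14 N => z.1) hh
    simp only [hA1d, hA2d] at this
    omega
  have hBne : B2 ≠ B1 := by
    intro hh
    have := congrArg (fun z : Act14 N => z.1) hh
    simp only [hB1d, hB2d] at this
    omega
  have bi1 := blockIdx_odd hi.1
  have bi2 := blockIdx_even hi.1
  have ri1 := inBlockIdx_odd hi.1
  have ri2 := inBlockIdx_even hi.1
  have bj1 := blockIdx_odd hj.1
  have bj2 := blockIdx_even hj.1
  have rj1 := inBlockIdx_odd hj.1
  have rj2 := inBlockIdx_even hj.1
  apply hasCycle_of_four (game14 N x y)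
    (fun t => if t = 0 then ![A1, B1] else if t = 1 then ![A1, B2]
      else if t = 2 then ![A2, B2] else ![A2, B1])
  intro t ht
  interval_cases t
  · -- (A1,B1) → (A1,B2), player 1 (second) moves
    refine ⟨1, ?_, ?_, ?_⟩
    · norm_num
      exact hBne
    · intro q hq
      fin_cases q
      · norm_num
      · exact absurd rfl hq
    · unfold Act14 at *
      norm_num [game14, gadget2, hA1d, hA2d, hB1d, hB2d, bi1, bi2, ri1, ri2, bj1, bj2,
        rj1, rj2]
  · -- (A1,B2) → (A2,B2), player 0 moves
    refine ⟨0, ?_, ?_, ?_⟩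
    · norm_num
      exact hAne
    · intro q hq
      fin_cases q
      · exact absurd rfl hq
      · norm_num
    · unfold Act14 at *
      norm_num [game14, gadget1, hA1d, hA2d, hB1d, hB2d, bi1, bi2, ri1, ri2, bj1, bj2,
        rj1, rj2, hxij]
  · -- (A2,B2) → (A2,B1), player 1 moves
    refine ⟨1, ?_, ?_, ?_⟩
    · norm_num
      intro hh
      exact hBne hh.symm
    · intro q hq
      fin_cases q
      · norm_num
      · exact absurd rfl hq
    · unfold Act14 at *
      norm_num [game14, gadget2, hA1d, hA2d, hB1d, hB2d, bi1, bi2, ri1, ri2, bj1, bj2,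
        rj1, rj2, hyij]
  · -- (A2,B1) → (A1,B1), player 0 moves
    refine ⟨0, ?_, ?_, ?_⟩
    · norm_num
      intro hh
      exact hAne hh.symm
    · intro q hq
      fin_cases q
      · exact absurd rfl hq
      · norm_num
    · unfold Act14 at *
      norm_num [game14, gadget1, hA1d, hA2d, hB1d, hB2d, bi1, bi2, ri1, ri2, bj1, bj2,
        rj1, rj2]

end BRCAux

theorem stmt_14 (N : ℕ) (hN : 1 ≤ N) (x y : ℕ → ℕ → ℝ)
    (hx : ∀ i ∈ Finset.Icc 1 N, ∀ j ∈ Finset.Icc 1 N, x i j = 0 ∨ x i j = 2)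
    (hy : ∀ i ∈ Finset.Icc 1 N, ∀ j ∈ Finset.Icc 1 N, y i j = 0 ∨ y i j = 2) :
    HasBetterReplyCycle (game14 N x y) ↔
      ∃ i ∈ Finset.Icc 1 N, ∃ j ∈ Finset.Icc 1 N, x i j = 2 ∧ y i j = 2 := by
  constructor
  · exact fwd N hN x y hx hy
  · exact bwd N hN x y
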